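/- For even k ≥ 4, applying successively the specializations S(k/2 − 1, 0, k/2, 1), then S(0, 1, 0, k/2), then S(0, k/2, 0, k/2) to the data (3k; k(k+5)/2 + 1, k²/2) with sub-star (k+1, k/2), using the residuation rule (d;L,C,(A,B)) ↦ (d−1; L−ℓ+h−2s, C−c+s−h, (ℓ+2c+h, c)), yields exactly (3(k−1); (k−1)(k+4)/2 + 2, ((k−1)²−1)/2) with sub-star (k, k/2). -/
import Mathlib

/-- The data `(d; L, C, (A, B))` of a scheme `B(d; L, C, (A,B))`. -/
def SpecData : Type := ℤ × ℤ × ℤ × ℤ × ℤ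

/-- The residual of the specialization `S(ℓ,s,h,c)` applied to `(d; L, C, (A,B))` is
`(d−1; L−ℓ+h−2s, C−c+s−h, (ℓ+2c+h, c))`. -/
def specResidual (ℓ s h c : ℤ) : SpecData → SpecData :=
  fun x => (x.1 - 1, x.2.1 - ℓ + h - 2 * s, x.2.2.1 - c + s - h, ℓ + 2 * c + h, c)

/-- Reduction Lemma, even case: for even `k ≥ 4`, applying `S(k/2 − 1, 0, k/2, 1)`,
then `S(0, 1, 0, k/2)`, then `S(0, k/2, 0, k/2)` to
`(3k; k(k+5)/2 + 1, k²/2, (k+1, k/2))` yields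
`(3(k−1); (k−1)(k+4)/2 + 2, ((k−1)²−1)/2, (k, k/2))`. -/
theorem stmt7 (k : ℤ) (hk : Even k) (hk4 : 4 ≤ k) :
    specResidual 0 (k / 2) 0 (k / 2)
      (specResidual 0 1 0 (k / 2)
        (specResidual (k / 2 - 1) 0 (k / 2) 1
          ((3 * k, k * (k + 5) / 2 + 1, k ^ 2 / 2, k + 1, k / 2) : SpecData)))
      = ((3 * (k - 1), (k - 1) * (k + 4) / 2 + 2, ((k - 1) ^ 2 - 1) / 2, k, k / 2) :
          SpecData) := by
  obtain ⟨m, rfl⟩ := hk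
  have h2 : m + m = 2 * m := by ring
  simp only [specResidual, h2]
  have e1 : (2 * m) / 2 = m := by omega
  have e2 : (2 * m) * (2 * m + 5) / 2 = m * (2 * m + 5) := by
    have : (2 * m) * (2 * m + 5) = 2 * (m * (2 * m + 5)) := by ring
    rw [this]; omega
  have e3 : (2 * m) ^ 2 / 2 = 2 * m ^ 2 := by
    have : (2 * m) ^ 2 = 2 * (2 * m ^ 2) := by ring
    rw [this]; omega
  have e4 : (2 * m - 1) * (2 * m + 4) / 2 = (m * 2 - 1) * (m + 2) := by
    have : (2 * m - 1) * (2 * m + 4) = 2 * ((m * 2 - 1) * (m + 2)) := by ring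
    rw [this]; omega
  have e5 : ((2 * m - 1) ^ 2 - 1) / 2 = 2 * m ^ 2 - 2 * m := by
    have : (2 * m - 1) ^ 2 - 1 = 2 * (2 * m ^ 2 - 2 * m) := by ring
    rw [this]; omega
  rw [e1, e2, e3, e4, e5]
  refine Prod.ext (by ring) (Prod.ext (by ring) (Prod.ext (by ring) (Prod.ext (by ring) rfl)))
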